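/- Let V be a vector space and U ⊂ V a subspace. If an element A of V_{λ,μ} = V[[λ^{-1}, μ^{-1}, (λ+μ)^{-1}]][λ,μ] has the property that its expansion ι_{μ,λ}A ∈ V((λ^{-1}))((μ^{-1})), obtained by expanding negative powers of λ+μ in the region |μ|>|λ|, has all coefficients in U, then A lies in U_{λ,μ} = U[[λ^{-1}, μ^{-1}, (λ+μ)^{-1}]][λ,μ]. -/

import Mathlib

/-- The integer binomial coefficient `C(p, k)` for `p ∈ ℤ`, `k ∈ ℕ`
(the integer division is exact). -/
noncomputable def zchoose (p : ℤ) (k : ℕ) : ℤ :=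
  (∏ i ∈ Finset.range k, (p - (i : ℤ))) / (k.factorial : ℤ)

/-- Given an element of `V_{λ,μ} = V[[λ⁻¹, μ⁻¹, (λ+μ)⁻¹]][λ,μ]` presented by its
coefficients `c m n p` of the monomials `λ^m μ^n (λ+μ)^p`, this is the coefficient of
`λ^a μ^b` in the expansion `ι_{μ,λ}` obtained by expanding the negative powers of `λ+μ`
in the region `|μ| > |λ|`, i.e. `(λ+μ)^p = Σ_{k ≥ 0} C(p,k) λ^k μ^{p-k}`. -/
noncomputable def expandCoeff {V : Type*} [AddCommGroup V]
    (c : ℤ → ℤ → ℤ → V) (a b : ℤ) : V :=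
  ∑ᶠ m : ℤ, ∑ᶠ n : ℤ, ∑ᶠ p : ℤ,
    if m + n + p = a + b ∧ m ≤ a then (zchoose p (a - m).toNat) • c m n p else 0

lemma prod_desc_nat (q k : ℕ) :
    (∏ i ∈ Finset.range k, ((q : ℤ) - (i : ℤ))) = (q.descFactorial k : ℤ) := by
  induction k with
  | zero => simp
  | succ k ih =>
    rw [Finset.prod_range_succ, ih, Nat.descFactorial_succ]
    rcases lt_or_ge k q with h | h
    · push_cast [Nat.cast_sub h.le]; ring
    · rw [Nat.sub_eq_zero_of_le h, zero_mul, Nat.cast_zero]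
      rcases eq_or_lt_of_le h with rfl | h'
      · simp
      · rw [Nat.descFactorial_eq_zero_iff_lt.2 h']; simp

lemma prod_desc_neg (j k : ℕ) :
    (∏ i ∈ Finset.range k, ((-(j:ℤ) - 1) - (i : ℤ)))
      = (-1) ^ k * ((k + j).descFactorial k : ℤ) := by
  induction k with
  | zero => simp
  | succ k ih =>
    rw [Finset.prod_range_succ, ih]
    have h1 : (k + 1 + j).descFactorial (k+1) = (k + j + 1) * (k + j).descFactorial k := by
      have : k + 1 + j = (k + j) + 1 := by omega
      rw [this, Nat.succ_descFactorial_succ]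
    rw [h1]
    push_cast
    ring

lemma zchoose_natCast (q k : ℕ) : zchoose (q : ℤ) k = (q.choose k : ℤ) := by
  rw [zchoose, prod_desc_nat, Nat.choose_eq_descFactorial_div_factorial]
  exact_mod_cast (Int.natCast_ediv (q.descFactorial k) (k.factorial)).symm

lemma zchoose_neg (j k : ℕ) : zchoose (-(j:ℤ) - 1) k = (-1) ^ k * ((k + j).choose j : ℤ) := by
  rw [zchoose, prod_desc_neg, Int.mul_ediv_assoc _ (Int.natCast_dvd_natCast.2 (Nat.factorial_dvd_descFactorial _ _)), ← Int.natCast_ediv, ← Nat.choose_eq_descFactorial_div_factorial]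
  congr 2
  rw [← Nat.choose_symm (by omega : k ≤ k + j)]
  congr 1
  omega

lemma zchoose_zero (p : ℤ) : zchoose p 0 = 1 := by simp [zchoose]

lemma zchoose_nat_eq_zero {q k : ℕ} (h : q < k) : zchoose (q : ℤ) k = 0 := by
  rw [zchoose_natCast, Nat.choose_eq_zero_of_lt h, Nat.cast_zero]

/-- upper Pascal -/
lemma zchoose_succ_left (p : ℤ) (t : ℕ) :
    zchoose (p + 1) (t + 1) = zchoose p (t + 1) + zchoose p t := by
  rcases le_or_gt 0 p with hp | hp
  · obtain ⟨q, rfl⟩ := Int.eq_ofNat_of_zero_le hp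
    have : (q : ℤ) + 1 = ((q + 1 : ℕ) : ℤ) := by push_cast; ring
    rw [this, zchoose_natCast, zchoose_natCast, zchoose_natCast, Nat.choose_succ_succ]
    push_cast; ring
  · obtain ⟨j, hj⟩ : ∃ j : ℕ, p = -(j:ℤ) - 1 := ⟨(-p-1).toNat, by omega⟩
    subst hj
    rcases Nat.eq_zero_or_pos j with rfl | hj
    · have e1 : zchoose (-((0:ℕ):ℤ) - 1 + 1) (t+1) = 0 := by
        rw [show (-((0:ℕ):ℤ) - 1 + 1) = ((0:ℕ):ℤ) by norm_num]
        exact zchoose_nat_eq_zero (Nat.succ_pos t)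
      rw [e1, zchoose_neg, zchoose_neg]
      simp [pow_succ]
    · obtain ⟨i, rfl⟩ := Nat.exists_eq_add_of_lt hj
      have h0 : (-(0 + i + 1:ℕ):ℤ) - 1 + 1 = -(i:ℕ) - 1 := by push_cast; ring
      rw [h0, zchoose_neg, zchoose_neg, zchoose_neg]
      have hpas : (t + 1 + (i+1)).choose (i+1) = (t + (i+1)).choose i + (t + (i+1)).choose (i+1) := by
        have : t + 1 + (i+1) = (t + (i + 1)) + 1 := by omega
        rw [this, Nat.choose_succ_succ]
      have h2 : t + 1 + i = t + (i+1) := by omega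
      simp only [Nat.zero_add] at *
      rw [h2, hpas]
      push_cast
      ring
theorem zchoose_vandermonde (p : ℤ) (K : ℕ) : ∀ t : ℕ, K ≤ t →
    (∑ k ∈ Finset.range (K+1), (K.choose k : ℤ) * zchoose p (t - k)) = zchoose (p + K) t := by
  induction K with
  | zero => intro t ht; simp
  | succ K ih =>
    intro t ht
    obtain ⟨t, rfl⟩ : ∃ t', t = t' + 1 := ⟨t - 1, by omega⟩
    have hKt : K ≤ t := by omega
    have split : ∀ k, (((K+1).choose k : ℤ)) * zchoose p (t + 1 - k)
        = (K.choose k : ℤ) * zchoose p (t + 1 - k)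
          + (if k = 0 then 0 else (K.choose (k-1) : ℤ) * zchoose p (t + 1 - k)) := by
      intro k
      cases k with
      | zero => simp
      | succ k =>
        rw [Nat.choose_succ_succ]
        simp only [Nat.succ_ne_zero, if_false, Nat.add_sub_cancel]
        push_cast
        ring
    rw [Finset.sum_congr rfl (fun k _ => split k), Finset.sum_add_distrib]
    have h1 : (∑ k ∈ Finset.range (K+1+1), (K.choose k : ℤ) * zchoose p (t + 1 - k))
        = zchoose (p + K) (t+1) := by
      rw [Finset.sum_range_succ, Nat.choose_succ_self, Nat.cast_zero, zero_mul, add_zero]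
      exact ih (t+1) (by omega)
    have h2 : (∑ k ∈ Finset.range (K+1+1),
          (if k = 0 then 0 else (K.choose (k-1) : ℤ) * zchoose p (t + 1 - k)))
        = zchoose (p + K) t := by
      rw [Finset.sum_range_succ' _ (K+1)]
      simp only [Nat.succ_ne_zero, if_false, Nat.add_sub_cancel, if_true, add_zero, reduceIte]
      rw [← ih t hKt]
      apply Finset.sum_congr rfl
      intro k hk
      congr 2
      omega
    rw [h1, h2, show p + ((K:ℕ)+1:ℕ) = (p + K) + 1 by push_cast; ring, zchoose_succ_left]
theorem det_binom : ∀ (s J : ℕ),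
    (Matrix.of fun t j : Fin s => (((J + ↑t).choose ↑j : ℕ) : ℤ)).det = 1 := by
  intro s
  induction s with
  | zero => intro J; simp
  | succ s ih =>
    intro J
    set A : Matrix (Fin (s+1)) (Fin (s+1)) ℤ :=
      Matrix.of (fun t j => (((J + ↑t).choose ↑j : ℕ) : ℤ)) with hA
    set L : Matrix (Fin (s+1)) (Fin (s+1)) ℤ :=
      Matrix.of (fun t u => if (u:ℕ) = (t:ℕ) then 1 else if (u:ℕ) + 1 = (t:ℕ) then -1 else 0) with hL
    have hLdet : L.det = 1 := by
      rw [Matrix.det_of_lowerTriangular L (by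
        intro i j hij
        have : (i:ℕ) < (j:ℕ) := hij
        simp only [hL, Matrix.of_apply]
        rw [if_neg (by omega), if_neg (by omega)])]
      simp [hL]
    set A' : Matrix (Fin (s+1)) (Fin (s+1)) ℤ :=
      Matrix.of (fun t j => if (t:ℕ) = 0 then ((J.choose ↑j : ℕ) : ℤ)
        else if (j:ℕ) = 0 then 0 else (((J + (↑t-1)).choose (↑j-1) : ℕ) : ℤ)) with hA'
    have hmul : L * A = A' := by
      ext t j
      rw [Matrix.mul_apply]
      have hLtt : L t t = 1 := by simp [hL]
      rcases Nat.eq_zero_or_pos (t:ℕ) with ht0 | htpos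
      · rw [Finset.sum_eq_single t (fun u _ hu => by
          have hne : (u:ℕ) ≠ (t:ℕ) := fun h => hu (Fin.ext h)
          simp only [hL, Matrix.of_apply]
          rw [if_neg hne, if_neg (by omega), zero_mul]) (by simp)]
        rw [hLtt, one_mul]
        show A t j = A' t j
        simp only [hA, hA', Matrix.of_apply, ht0, if_pos rfl]
        norm_num
      · obtain ⟨tn, htn⟩ : ∃ tn, (t:ℕ) = tn + 1 := ⟨(t:ℕ)-1, by omega⟩
        set t' : Fin (s+1) := ⟨tn, by omega⟩ with ht'
        have ht'v : (t':ℕ) = tn := rfl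
        have hLtt' : L t t' = -1 := by
          simp only [hL, Matrix.of_apply, ht'v]
          rw [if_neg (by omega), if_pos (by omega)]
        have hsum : ∑ u, L t u * A u j = L t t * A t j + L t t' * A t' j := by
          apply Finset.sum_eq_add_of_mem t t' (Finset.mem_univ _) (Finset.mem_univ _)
            (fun h => by have := congrArg Fin.val h; rw [ht'v] at this; omega)
          intro u _ hu
          have h1 : (u:ℕ) ≠ (t:ℕ) := fun h => hu.1 (Fin.ext h)
          have h2 : (u:ℕ) ≠ tn := fun h => hu.2 (Fin.ext (by rw [ht'v, h]))
          simp only [hL, Matrix.of_apply]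
          rw [if_neg h1, if_neg (by omega), zero_mul]
        rw [hsum, hLtt, hLtt', one_mul, neg_one_mul]
        show A t j - A t' j = A' t j
        simp only [hA, hA', Matrix.of_apply, ht'v, htn]
        rw [if_neg (by omega : ¬ tn + 1 = 0), Nat.add_sub_cancel]
        rcases Nat.eq_zero_or_pos (j:ℕ) with hj0 | hjpos
        · rw [if_pos hj0, hj0]
          simp
        · obtain ⟨jn, hjn⟩ : ∃ jn, (j:ℕ) = jn + 1 := ⟨(j:ℕ)-1, by omega⟩
          rw [if_neg (by omega), hjn, Nat.add_sub_cancel,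
            show J + (tn+1) = (J + tn) + 1 from rfl, Nat.choose_succ_succ]
          push_cast
          ring
    have hdet : A.det = A'.det := by
      rw [← hmul, Matrix.det_mul, hLdet, one_mul]
    rw [hdet, Matrix.det_succ_column_zero]
    rw [Finset.sum_eq_single 0 (fun i _ hi => by
      have hval : (i:ℕ) ≠ 0 := fun h => hi (Fin.ext (by simpa using h))
      have hz : A' i 0 = 0 := by
        simp only [hA', Matrix.of_apply]
        rw [if_neg hval, if_pos (by simp)]
      rw [hz]
      ring) (by simp)]
    have h5 : A' 0 0 = 1 := by simp [hA']
    rw [h5]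
    have h6 : (A'.submatrix (Fin.succAbove 0) Fin.succ)
        = Matrix.of (fun t j : Fin s => (((J + ↑t).choose ↑j : ℕ) : ℤ)) := by
      ext t j
      simp only [Matrix.submatrix_apply, Fin.succAbove_zero, hA', Matrix.of_apply]
      rw [if_neg (by simp), if_neg (by simp)]
      simp
    rw [h6, ih J]
    simp


/-- Workhorse: `expandCoeff` as a finite double sum. -/
theorem expandCoeff_eq_sum {V : Type*} [AddCommGroup V]
    (c : ℤ → ℤ → ℤ → V) (a b : ℤ) (s₁ s₂ : Finset ℤ)
    (h : ∀ m n, m ≤ a → c m n (a + b - m - n) ≠ 0 → m ∈ s₁ ∧ n ∈ s₂) :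
    expandCoeff c a b = ∑ m ∈ s₁, ∑ n ∈ s₂,
      if m ≤ a then (zchoose (a + b - m - n) (a - m).toNat) • c m n (a + b - m - n) else 0 := by
  rw [expandCoeff]
  have hp : ∀ m n : ℤ, (∑ᶠ p : ℤ, if m + n + p = a + b ∧ m ≤ a
        then (zchoose p (a - m).toNat) • c m n p else 0)
      = if m ≤ a then (zchoose (a + b - m - n) (a - m).toNat) • c m n (a + b - m - n) else 0 := by
    intro m n
    rw [finsum_eq_single _ (a + b - m - n) (fun p hp => by
      rw [if_neg]
      rintro ⟨h1, -⟩
      exact hp (by omega))]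
    by_cases hm : m ≤ a
    · rw [if_pos ⟨by ring, hm⟩, if_pos hm]
    · rw [if_neg (fun hc => hm hc.2), if_neg hm]
  have hn : ∀ m : ℤ, (∑ᶠ n : ℤ, ∑ᶠ p : ℤ, if m + n + p = a + b ∧ m ≤ a
        then (zchoose p (a - m).toNat) • c m n p else 0)
      = if m ∈ s₁ then (∑ n ∈ s₂, if m ≤ a
          then (zchoose (a + b - m - n) (a - m).toNat) • c m n (a + b - m - n) else 0) else 0 := by
    intro m
    simp_rw [hp m]
    by_cases hm1 : m ∈ s₁
    · rw [if_pos hm1]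
      apply finsum_eq_finset_sum_of_support_subset
      intro n hn
      simp only [Function.mem_support] at hn
      by_cases hma : m ≤ a
      · rw [if_pos hma] at hn
        exact (h m n hma (fun h0 => hn (by rw [h0, smul_zero]))).2
      · rw [if_neg hma] at hn; exact absurd rfl hn
    · rw [if_neg hm1]
      apply finsum_eq_zero_of_forall_eq_zero
      intro n
      by_cases hma : m ≤ a
      · rw [if_pos hma]
        by_cases h0 : c m n (a + b - m - n) = 0
        · rw [h0, smul_zero]
        · exact absurd (h m n hma h0).1 hm1
      · rw [if_neg hma]
  simp_rw [hn]
  rw [finsum_eq_finset_sum_of_support_subset _ (s := s₁) (fun m hm => by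
    simp only [Function.mem_support] at hm
    by_contra hm1
    rw [if_neg (by simpa using hm1)] at hm
    exact hm rfl)]
  apply Finset.sum_congr rfl
  intro m hm
  rw [if_pos hm]
lemma sum_Icc_fin {V : Type*} [AddCommMonoid V] (G : ℤ → V) (d : ℤ) (J : ℕ) :
    (∑ m ∈ Finset.Icc (d+1) (d+J), G m) = ∑ i : Fin J, G (d+1+((i:ℕ):ℤ)) := by
  induction J with
  | zero => simp
  | succ J ih =>
    rw [Fin.sum_univ_castSucc]
    have h1 : (Finset.Icc (d+1) (d+(J+1:ℕ))) = insert (d+1+J) (Finset.Icc (d+1) (d+J)) := by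
      ext x
      simp only [Finset.mem_Icc, Finset.mem_insert]
      push_cast
      omega
    rw [h1, Finset.sum_insert (by simp only [Finset.mem_Icc]; push_cast; omega), ih]
    simp only [Fin.coe_castSucc, Fin.val_last]
    rw [add_comm]

theorem expand_vanish {V : Type*} [AddCommGroup V] (c : ℤ → ℤ → ℤ → V) (M N P : ℤ)
    (hc : ∀ m n p : ℤ, c m n p ≠ 0 → m ≤ M ∧ n ≤ N ∧ p ≤ P) (a b : ℤ)
    (h : N + P < b ∨ M + N + P < a + b) : expandCoeff c a b = 0 := by
  rw [expandCoeff_eq_sum c a b ∅ ∅ (fun m n hma hcn => by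
    obtain ⟨h1, h2, h3⟩ := hc _ _ _ hcn
    omega)]
  simp

theorem expand_rec {V : Type*} [AddCommGroup V] (c : ℤ → ℤ → ℤ → V) (M N P : ℤ)
    (hc : ∀ m n p : ℤ, c m n p ≠ 0 → m ≤ M ∧ n ≤ N ∧ p ≤ P) (M₁ : ℤ)
    (hMN : M + N < M₁) (hMP : M + P < M₁) (hM : M < M₁)
    (d a : ℤ) (J : ℕ) (hJ : (J:ℤ) = M₁ - d) (ha : M₁ + J < a) :
    ∑ k ∈ Finset.range (J+1), ((J.choose k : ℕ) : ℤ) • expandCoeff c (a-k) (d-(a-k)) = 0 := by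
  have hek : ∀ k ∈ Finset.range (J+1), ((J.choose k : ℕ) : ℤ) • expandCoeff c (a-k) (d-(a-k))
      = ∑ m ∈ Finset.Icc (d-N-P) M, ∑ n ∈ Finset.Icc (d-M-P) N,
        ((J.choose k : ℕ) : ℤ) • (if m ≤ a-k
          then zchoose (d-m-n) ((a-k-m).toNat) • c m n (d-m-n) else 0) := by
    intro k _
    rw [expandCoeff_eq_sum c (a-↑k) (d-(a-↑k)) (Finset.Icc (d-N-P) M) (Finset.Icc (d-M-P) N)
      (fun m n hma hcn => by
        obtain ⟨h1, h2, h3⟩ := hc _ _ _ hcn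
        constructor <;> simp only [Finset.mem_Icc] <;> omega)]
    rw [Finset.smul_sum]
    apply Finset.sum_congr rfl
    intro m _
    rw [Finset.smul_sum]
    apply Finset.sum_congr rfl
    intro n _
    have h4 : a - ↑k + (d - (a - ↑k)) - m - n = d - m - n := by ring
    rw [h4]
  rw [Finset.sum_congr rfl hek, Finset.sum_comm]
  apply Finset.sum_eq_zero
  intro m hm
  rw [Finset.sum_comm]
  apply Finset.sum_eq_zero
  intro n hn
  simp only [Finset.mem_Icc] at hm hn
  by_cases h0 : c m n (d-m-n) = 0
  · simp [h0]
  obtain ⟨h1, h2, h3⟩ := hc _ _ _ h0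
  have hind : ∀ k ∈ Finset.range (J+1), ((J.choose k : ℕ) : ℤ) • (if m ≤ a-↑k
        then zchoose (d-m-n) ((a-↑k-m).toNat) • c m n (d-m-n) else 0)
      = (((J.choose k : ℕ) : ℤ) * zchoose (d-m-n) ((a-m).toNat - k)) • c m n (d-m-n) := by
    intro k hk
    simp only [Finset.mem_range] at hk
    rw [if_pos (by omega), smul_smul,
      show (a - ↑k - m).toNat = (a - m).toNat - k by omega]
  rw [Finset.sum_congr rfl hind, ← Finset.sum_smul,
    zchoose_vandermonde (d-m-n) J ((a-m).toNat) (by omega)]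
  have hq : d - m - n + (J:ℤ) = (((d - m - n + J).toNat : ℕ) : ℤ) := by omega
  rw [hq, zchoose_nat_eq_zero (by omega), zero_smul]

theorem wsum_rec {V : Type*} [AddCommGroup V] (w : ℤ → V) (M₁ d a : ℤ) (J : ℕ)
    (hJ : (J:ℤ) = M₁ - d) (ha : M₁ + J < a) :
    ∑ k ∈ Finset.range (J+1), ((J.choose k : ℕ) : ℤ) •
      (∑ m ∈ Finset.Icc (d+1) (min (a-k) M₁), zchoose (d-m) ((a-k-m).toNat) • w m) = 0 := by
  have hmin : ∀ k ∈ Finset.range (J+1), min (a-(k:ℤ)) M₁ = M₁ := by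
    intro k hk
    simp only [Finset.mem_range] at hk
    omega
  have hek : ∀ k ∈ Finset.range (J+1), ((J.choose k : ℕ) : ℤ) •
        (∑ m ∈ Finset.Icc (d+1) (min (a-k) M₁), zchoose (d-m) ((a-k-m).toNat) • w m)
      = ∑ m ∈ Finset.Icc (d+1) M₁,
          (((J.choose k : ℕ) : ℤ) * zchoose (d-m) ((a-m).toNat - k)) • w m := by
    intro k hk
    simp only [Finset.mem_range] at hk
    rw [hmin k (by simp; omega), Finset.smul_sum]
    apply Finset.sum_congr rfl
    intro m hm
    simp only [Finset.mem_Icc] at hm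
    rw [smul_smul, show (a - ↑k - m).toNat = (a - m).toNat - k by omega]
  rw [Finset.sum_congr rfl hek, Finset.sum_comm]
  apply Finset.sum_eq_zero
  intro m hm
  simp only [Finset.mem_Icc] at hm
  rw [← Finset.sum_smul, zchoose_vandermonde (d-m) J ((a-m).toNat) (by omega)]
  have hq : d - m + (J:ℤ) = (((d - m + J).toNat : ℕ) : ℤ) := by omega
  rw [hq, zchoose_nat_eq_zero (by omega), zero_smul]

theorem isUnit_detZ (J : ℕ) :
    IsUnit (Matrix.of fun t j : Fin J => zchoose (-(↑(j:ℕ):ℤ) - 1) (J + ↑t - ↑j)).det := by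
  have hZ : (Matrix.of fun t j : Fin J => zchoose (-(↑(j:ℕ):ℤ) - 1) (J + ↑t - ↑j))
      = Matrix.of (fun t j : Fin J =>
          ((-1:ℤ))^(J + (t:ℕ)) * (((-1:ℤ))^((j:ℕ)) * (((J + ↑t).choose ↑j : ℕ) : ℤ))) := by
    ext t j
    simp only [Matrix.of_apply]
    rw [zchoose_neg]
    have hle : (j:ℕ) ≤ J + (t:ℕ) := by omega
    have h1 : J + (t:ℕ) - (j:ℕ) + (j:ℕ) = J + (t:ℕ) := by omega
    have h2 : ((-1:ℤ))^(J + (t:ℕ)) * ((-1:ℤ))^((j:ℕ)) = ((-1:ℤ))^(J + (t:ℕ) - (j:ℕ)) := by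
      rw [← h1, pow_add, mul_assoc, ← pow_add]
      norm_num
    rw [← h2, h1]
    ring
  rw [hZ]
  have h3 := Matrix.det_mul_column (fun t : Fin J => ((-1:ℤ))^(J + (t:ℕ)))
    (Matrix.of (fun t j : Fin J => ((-1:ℤ))^((j:ℕ)) * (((J + ↑t).choose ↑j : ℕ) : ℤ)))
  rw [show (Matrix.of fun t j : Fin J =>
      ((-1:ℤ))^(J + (t:ℕ)) * (((-1:ℤ))^((j:ℕ)) * (((J + ↑t).choose ↑j : ℕ) : ℤ)))
    = (Matrix.of fun t j : Fin J => (fun t : Fin J => ((-1:ℤ))^(J + (t:ℕ))) t *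
        (Matrix.of (fun t j : Fin J => ((-1:ℤ))^((j:ℕ)) * (((J + ↑t).choose ↑j : ℕ) : ℤ))) t j)
    from rfl, h3]
  have h4 := Matrix.det_mul_row (fun j : Fin J => ((-1:ℤ))^((j:ℕ)))
    (Matrix.of (fun t j : Fin J => (((J + ↑t).choose ↑j : ℕ) : ℤ)))
  rw [show (Matrix.of fun t j : Fin J => ((-1:ℤ))^((j:ℕ)) * (((J + ↑t).choose ↑j : ℕ) : ℤ))
    = (Matrix.of fun t j : Fin J => (fun j : Fin J => ((-1:ℤ))^((j:ℕ))) j *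
        (Matrix.of (fun t j : Fin J => (((J + ↑t).choose ↑j : ℕ) : ℤ))) t j) from rfl, h4,
    det_binom J J, mul_one]
  apply IsUnit.mul
  · rw [Finset.prod_pow_eq_pow_sum]
    exact (isUnit_one.neg).pow _
  · rw [Finset.prod_pow_eq_pow_sum]
    exact (isUnit_one.neg).pow _

/-- Let `U ⊆ V` be a subspace.  If an element `A` of
`V_{λ,μ} = V[[λ⁻¹, μ⁻¹, (λ+μ)⁻¹]][λ,μ]` (presented by coefficients `c` with bounded
support) has the property that all coefficients of its expansion
`ι_{μ,λ} A ∈ V((λ⁻¹))((μ⁻¹))` lie in `U`, then `A` lies in `U_{λ,μ}`: it can be presented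
by coefficients lying in `U` (with bounded support and the same expansion). -/
theorem stmt2 (F V : Type*) [Field F] [AddCommGroup V] [Module F V] (U : Submodule F V)
    (M N P : ℤ) (c : ℤ → ℤ → ℤ → V)
    (hc : ∀ m n p : ℤ, c m n p ≠ 0 → m ≤ M ∧ n ≤ N ∧ p ≤ P)
    (hU : ∀ a b : ℤ, expandCoeff c a b ∈ U) :
    ∃ (M' N' P' : ℤ) (c' : ℤ → ℤ → ℤ → V),
      (∀ m n p : ℤ, c' m n p ≠ 0 → m ≤ M' ∧ n ≤ N' ∧ p ≤ P') ∧
      (∀ m n p : ℤ, c' m n p ∈ U) ∧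
      (∀ a b : ℤ, expandCoeff c' a b = expandCoeff c a b) := by
  classical
  have habsN : N ≤ |N| := le_abs_self N
  have habsP : P ≤ |P| := le_abs_self P
  have habsN0 : 0 ≤ |N| := abs_nonneg N
  have habsP0 : 0 ≤ |P| := abs_nonneg P
  set M₁ : ℤ := M + |N| + |P| + 1 with hM₁
  set Nb : ℤ := |N| + |P| with hNb
  let e : ℤ → ℤ → V := fun x y => expandCoeff c x y
  let Jd : ℤ → ℕ := fun d => (M₁ - d).toNat
  let Zm : (d : ℤ) → Matrix (Fin (Jd d)) (Fin (Jd d)) ℤ :=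
    fun d => Matrix.of fun t j => zchoose (-(↑(j:ℕ):ℤ) - 1) (Jd d + ↑t - ↑j)
  let er : (d : ℤ) → Fin (Jd d) → V := fun d t => e (M₁ + 1 + ((t:ℕ):ℤ)) (d - (M₁ + 1 + ((t:ℕ):ℤ)))
  let wfin : (d : ℤ) → Fin (Jd d) → V := fun d j => ∑ t, ((Zm d)⁻¹ j t) • er d t
  let wv : ℤ → ℤ → V := fun d jj =>
    if h : (jj - 1).toNat < Jd d ∧ 1 ≤ jj then wfin d ⟨(jj - 1).toNat, h.1⟩ else 0
  let wS : ℤ → ℤ → V := fun d x =>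
    ∑ m ∈ Finset.Icc (d + 1) (min x M₁), zchoose (d - m) ((x - m).toNat) • wv d (m - d)
  let c' : ℤ → ℤ → ℤ → V := fun m n p =>
    (if p = 0 ∧ m ≤ M₁ then e m n - wS (m + n) m else 0) +
    (if n = 0 ∧ p ≤ -1 ∧ m ≤ M₁ then wv (m + p) (-p) else 0)
  -- vanishing of e
  have hev : ∀ x y : ℤ, (Nb < y ∨ M₁ ≤ x + y) → e x y = 0 := by
    intro x y h
    exact expand_vanish c M N P hc x y (by omega)
  -- membership facts
  have hwfinU : ∀ d j, wfin d j ∈ U := by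
    intro d j
    exact Submodule.sum_mem _ (fun t _ => zsmul_mem (hU _ _) _)
  have hwvU : ∀ d jj, wv d jj ∈ U := by
    intro d jj
    simp only [wv]
    split
    · exact hwfinU _ _
    · exact Submodule.zero_mem _
  have hwSU : ∀ d x, wS d x ∈ U := by
    intro d x
    exact Submodule.sum_mem _ (fun m _ => zsmul_mem (hwvU _ _) _)
  have hc'U : ∀ m n p, c' m n p ∈ U := by
    intro m n p
    apply Submodule.add_mem
    · split
      · exact Submodule.sub_mem _ (hU _ _) (hwSU _ _)
      · exact Submodule.zero_mem _
    · split
      · exact hwvU _ _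
      · exact Submodule.zero_mem _
  -- bounds
  have hbound : ∀ m n p : ℤ, c' m n p ≠ 0 → m ≤ M₁ ∧ n ≤ Nb ∧ p ≤ 0 := by
    intro m n p h0
    by_contra hcon
    apply h0
    simp only [c']
    push_neg at hcon
    rcases le_or_gt m M₁ with hm | hm
    · rcases le_or_gt p 0 with hp | hp
      · -- must be n > Nb
        have hn : Nb < n := by
          rcases lt_or_ge Nb n with h | h
          · exact h
          · exact absurd (hcon hm h) (by omega)
        have h1 : e m n = 0 := hev m n (Or.inl hn)
        have h2 : wS (m + n) m = 0 := by
          simp only [wS]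
          rw [Finset.Icc_eq_empty (by
            intro hle
            have := min_le_left m M₁
            omega)]
          exact Finset.sum_empty
        rw [h1, h2, sub_zero]
        have hn0 : n ≠ 0 := by omega
        simp [hn0]
      · -- p > 0 : both branches off
        rw [if_neg (fun hh => by omega), if_neg (fun hh => by
          have := hh.2.1
          omega)]
        simp
    · rw [if_neg (fun hh => hm.not_ge hh.2), if_neg (fun hh => hm.not_ge hh.2.2)]
      simp
  -- base case
  have hwv_eq : ∀ d (i : Fin (Jd d)), wv d (1 + ((i:ℕ):ℤ)) = wfin d i := by
    intro d i
    have hlt : ((1 + ((i:ℕ):ℤ)) - 1).toNat < Jd d := by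
      have := i.isLt
      omega
    simp only [wv]
    rw [dif_pos ⟨hlt, by omega⟩]
    congr 1
    exact Fin.ext (by simp)
  have hbase : ∀ d : ℤ, ∀ t : Fin (Jd d),
      e (M₁ + 1 + ((t:ℕ):ℤ)) (d - (M₁ + 1 + ((t:ℕ):ℤ))) = wS d (M₁ + 1 + ((t:ℕ):ℤ)) := by
    intro d t
    have hJpos : 0 < Jd d := Nat.pos_of_ne_zero (fun h => by rw [h] at t; exact t.elim0)
    have hJdZ : ((Jd d : ℕ) : ℤ) = M₁ - d := by
      simp only [Jd]
      simp only [Jd] at hJpos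
      omega
    have hmin : min (M₁ + 1 + ((t:ℕ):ℤ)) M₁ = M₁ := by omega
    have hIcc : Finset.Icc (d + 1) M₁ = Finset.Icc (d + 1) (d + (Jd d : ℕ)) := by
      rw [show d + ((Jd d : ℕ) : ℤ) = M₁ by omega]
    have hstep1 : wS d (M₁ + 1 + ((t:ℕ):ℤ))
        = ∑ i : Fin (Jd d), Zm d t i • wfin d i := by
      simp only [wS, hmin, hIcc]
      rw [sum_Icc_fin (fun m => zchoose (d - m) ((M₁ + 1 + ((t:ℕ):ℤ) - m).toNat) • wv d (m - d)) d (Jd d)]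
      apply Finset.sum_congr rfl
      intro i _
      have h1 : d + 1 + ((i:ℕ):ℤ) - d = 1 + ((i:ℕ):ℤ) := by ring
      rw [h1, hwv_eq d i]
      congr 1
      have h2 : d - (d + 1 + ((i:ℕ):ℤ)) = -(↑(i:ℕ):ℤ) - 1 := by ring
      rw [h2]
      simp only [Zm, Matrix.of_apply]
      congr 1
      have hi := i.isLt
      have ht := t.isLt
      omega
    rw [hstep1]
    have hstep2 : ∀ i, Zm d t i • wfin d i
        = ∑ s, (Zm d t i * (Zm d)⁻¹ i s) • er d s := by
      intro i
      simp only [wfin]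
      rw [Finset.smul_sum]
      apply Finset.sum_congr rfl
      intro s _
      rw [smul_smul]
    simp_rw [hstep2]
    rw [Finset.sum_comm]
    have hstep3 : ∀ s, (∑ i, (Zm d t i * (Zm d)⁻¹ i s) • er d s)
        = ((Zm d * (Zm d)⁻¹) t s) • er d s := by
      intro s
      rw [← Finset.sum_smul, Matrix.mul_apply]
    simp_rw [hstep3, Matrix.mul_nonsing_inv (Zm d) (isUnit_detZ (Jd d))]
    rw [Finset.sum_eq_single t (fun s _ hs => by
      rw [Matrix.one_apply_ne' hs, zero_smul]) (by simp)]
    rw [Matrix.one_apply_eq, one_smul]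
  -- full diagonal identity
  have hkey : ∀ d : ℤ, ∀ t : ℕ,
      e (M₁ + 1 + (t:ℤ)) (d - (M₁ + 1 + (t:ℤ))) = wS d (M₁ + 1 + (t:ℤ)) := by
    intro d t
    induction t using Nat.strong_induction_on with
    | _ t IH =>
    rcases lt_or_ge d M₁ with hdM | hdM
    · have hJdZ : ((Jd d : ℕ) : ℤ) = M₁ - d := by
        simp only [Jd]
        omega
      rcases lt_or_ge t (Jd d) with htJ | htJ
      · exact hbase d ⟨t, htJ⟩
      · -- inductive step
        set a : ℤ := M₁ + 1 + (t:ℤ) with ha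
        have haJ : M₁ + (Jd d : ℕ) < a := by omega
        have hrec1 := expand_rec c M N P hc M₁ (by omega) (by omega) (by omega)
          d a (Jd d) hJdZ haJ
        have hrec2 := wsum_rec (fun m => wv d (m - d)) M₁ d a (Jd d) hJdZ haJ
        have hrec2' : ∑ k ∈ Finset.range (Jd d + 1), (((Jd d).choose k : ℕ) : ℤ) •
            wS d (a - k) = 0 := hrec2
        have hcomb : ∑ k ∈ Finset.range (Jd d + 1), (((Jd d).choose k : ℕ) : ℤ) •
            (e (a - k) (d - (a - k)) - wS d (a - k)) = 0 := by
          simp_rw [smul_sub]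
          rw [Finset.sum_sub_distrib, hrec1, hrec2', sub_zero]
        rw [Finset.sum_range_succ'] at hcomb
        have hzero : ∀ k ∈ Finset.range (Jd d), (((Jd d).choose (k+1) : ℕ) : ℤ) •
            (e (a - (k+1:ℕ)) (d - (a - (k+1:ℕ))) - wS d (a - (k+1:ℕ))) = 0 := by
          intro k hk
          simp only [Finset.mem_range] at hk
          have hteq : a - ((k+1:ℕ):ℤ) = M₁ + 1 + ((t - (k+1) : ℕ) : ℤ) := by
            push_cast
            omega
          rw [hteq, IH (t - (k+1)) (by omega), sub_self, smul_zero]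
        rw [Finset.sum_congr rfl hzero] at hcomb
        simp only [Finset.sum_const_zero, zero_add, Nat.cast_ofNat, Nat.choose_zero_right,
          Nat.cast_one, one_smul, Nat.cast_zero, sub_zero] at hcomb
        have : e (a - (0:ℤ)) (d - (a - (0:ℤ))) - wS d (a - (0:ℤ)) = 0 := by
          simpa using hcomb
        rw [sub_eq_zero] at this
        simpa using this
    · -- d ≥ M₁ : everything vanishes
      have h1 : e (M₁ + 1 + (t:ℤ)) (d - (M₁ + 1 + (t:ℤ))) = 0 :=
        hev _ _ (Or.inr (by omega))
      have h2 : wS d (M₁ + 1 + (t:ℤ)) = 0 := by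
        simp only [wS]
        rw [Finset.Icc_eq_empty (by
          intro hle
          have := min_le_right (M₁ + 1 + (t:ℤ)) M₁
          omega)]
        exact Finset.sum_empty
      rw [h1, h2]
  have hmain : ∀ x y : ℤ, M₁ < x → e x y = wS (x + y) x := by
    intro x y hx
    have h0 : (M₁ + 1 + (((x - M₁ - 1).toNat : ℕ) : ℤ)) = x := by omega
    have := hkey (x + y) ((x - M₁ - 1).toNat)
    rw [h0, show x + y - x = y by ring] at this
    exact this
  refine ⟨M₁, Nb, 0, c', hbound, hc'U, ?_⟩
  -- expansion equality
  intro a b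
  have hminb : min a M₁ ≤ a := min_le_left _ _
  have hminb2 : min a M₁ ≤ M₁ := min_le_right _ _
  set s₁ : Finset ℤ := insert a (Finset.Icc (a + b - Nb) (min a M₁)) with hs₁
  set s₂ : Finset ℤ := insert b (insert 0 (Finset.Icc (a + b - min a M₁) Nb)) with hs₂
  have h' : ∀ m n, m ≤ a → c' m n (a + b - m - n) ≠ 0 → m ∈ s₁ ∧ n ∈ s₂ := by
    intro m n hma h0
    obtain ⟨h1, h2, h3⟩ := hbound _ _ _ h0
    have hm2 : m ≤ min a M₁ := le_min hma h1
    constructor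
    · exact Finset.mem_insert_of_mem (Finset.mem_Icc.2 (by omega))
    · exact Finset.mem_insert_of_mem (Finset.mem_insert_of_mem (Finset.mem_Icc.2 (by omega)))
  rw [expandCoeff_eq_sum c' a b s₁ s₂ h']
  set Tv : ℤ → ℤ → V := fun m n => if m ≤ a then zchoose (a + b - m - n) ((a - m).toNat) •
    (if a + b - m - n = 0 ∧ m ≤ M₁ then e m n - wS (m + n) m else 0) else 0 with hTv
  set Tw : ℤ → ℤ → V := fun m n => if m ≤ a then zchoose (a + b - m - n) ((a - m).toNat) •
    (if n = 0 ∧ a + b - m - n ≤ -1 ∧ m ≤ M₁ then wv (m + (a + b - m - n)) (-(a + b - m - n)) else 0) else 0 with hTw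
  have hterm : ∀ m n, (if m ≤ a then zchoose (a + b - m - n) ((a - m).toNat) •
      c' m n (a + b - m - n) else 0) = Tv m n + Tw m n := by
    intro m n
    simp only [hTv, hTw, c']
    by_cases hma : m ≤ a
    · rw [if_pos hma, if_pos hma, if_pos hma, smul_add]
    · rw [if_neg hma, if_neg hma, if_neg hma, add_zero]
  have hsplit : (∑ m ∈ s₁, ∑ n ∈ s₂, if m ≤ a then zchoose (a + b - m - n) ((a - m).toNat) •
      c' m n (a + b - m - n) else 0)
      = (∑ m ∈ s₁, ∑ n ∈ s₂, Tv m n) + (∑ m ∈ s₁, ∑ n ∈ s₂, Tw m n) := by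
    rw [← Finset.sum_add_distrib]
    apply Finset.sum_congr rfl
    intro m _
    rw [← Finset.sum_add_distrib]
    exact Finset.sum_congr rfl (fun n _ => hterm m n)
  rw [hsplit]
  -- the v-part collapses to the single term (a, b)
  have hTv0 : ∀ m n, (m ≠ a ∨ n ≠ b) → Tv m n = 0 := by
    intro m n hmn
    simp only [hTv]
    by_cases hma : m ≤ a
    · rw [if_pos hma]
      by_cases hz : a + b - m - n = 0 ∧ m ≤ M₁
      · rcases lt_or_eq_of_le hma with hlt | heq
        · rw [show a + b - m - n = ((0:ℕ):ℤ) by rw [Nat.cast_zero]; omega,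
            zchoose_nat_eq_zero (by omega), zero_smul]
        · exfalso
          rcases hmn with hm | hn
          · exact hm heq
          · apply hn
            omega
      · rw [if_neg hz, smul_zero]
    · rw [if_neg hma]
  have hclaim1 : (∑ m ∈ s₁, ∑ n ∈ s₂, Tv m n)
      = if a ≤ M₁ then e a b - wS (a + b) a else 0 := by
    rw [Finset.sum_eq_single_of_mem a (Finset.mem_insert_self _ _)
      (fun m _ hma => Finset.sum_eq_zero (fun n _ => hTv0 m n (Or.inl hma)))]
    rw [Finset.sum_eq_single_of_mem b (Finset.mem_insert_self _ _)
      (fun n _ hnb => hTv0 a n (Or.inr hnb))]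
    simp only [hTv]
    rw [if_pos (le_refl a), show (a - a).toNat = 0 by omega, zchoose_zero, one_smul]
    by_cases haM : a ≤ M₁
    · rw [if_pos ⟨by ring, haM⟩, if_pos haM]
    · rw [if_neg (fun hh => haM hh.2), if_neg haM]
  -- the w-part gives wS (a+b) a
  have hclaim2 : (∑ m ∈ s₁, ∑ n ∈ s₂, Tw m n) = wS (a + b) a := by
    have hinner : ∀ m ∈ s₁, (∑ n ∈ s₂, Tw m n) = Tw m 0 := by
      intro m _
      apply Finset.sum_eq_single_of_mem 0
        (Finset.mem_insert_of_mem (Finset.mem_insert_self _ _))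
      intro n _ hn0
      simp only [hTw]
      by_cases hma : m ≤ a
      · rw [if_pos hma, if_neg (fun hh => hn0 hh.1), smul_zero]
      · rw [if_neg hma]
    rw [Finset.sum_congr rfl hinner]
    have hsub : Finset.Icc (a + b + 1) (min a M₁) ⊆ s₁ := by
      intro m hm
      rw [Finset.mem_Icc] at hm
      exact Finset.mem_insert_of_mem (Finset.mem_Icc.2 (by omega))
    have hout : ∀ m ∈ s₁, m ∉ Finset.Icc (a + b + 1) (min a M₁) → Tw m 0 = 0 := by
      intro m _ hm
      rw [Finset.mem_Icc] at hm
      simp only [hTw]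
      by_cases hma : m ≤ a
      · rw [if_pos hma]
        rw [if_neg (fun hcnd => hm ⟨by have := hcnd.2.1; omega, le_min hma hcnd.2.2⟩),
          smul_zero]
      · rw [if_neg hma]
    rw [← Finset.sum_subset hsub hout]
    show _ = ∑ m ∈ Finset.Icc (a + b + 1) (min a M₁),
      zchoose (a + b - m) ((a - m).toNat) • wv (a + b) (m - (a + b))
    apply Finset.sum_congr rfl
    intro m hm
    rw [Finset.mem_Icc] at hm
    simp only [hTw]
    rw [if_pos (by omega), if_pos ⟨trivial, by omega, by omega⟩,
      show a + b - m - 0 = a + b - m by ring,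
      show m + (a + b - m) = a + b by ring,
      show -(a + b - m) = m - (a + b) by ring]
  rw [hclaim1, hclaim2]
  by_cases haM : a ≤ M₁
  · rw [if_pos haM, sub_add_cancel]
  · rw [if_neg haM, zero_add]
    exact (hmain a b (by omega)).symm
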